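/- Let 1<p<∞, a,b ∈ L^∞(𝕋), f ∈ H^p(𝕋), and n ∈ ℕ. If the equation (T(t^{-n}a) + H(t^n b))ψ = f has no solution ψ in the image of the operator T(t^n): H^p(𝕋) → H^p(𝕋), then the equation (T(a)+H(b))φ = f is not solvable. -/

import Mathlib

open MeasureTheory Complex Real BigOperators
open scoped ENNReal

noncomputable section

instance fact2pi : Fact (0 < 2 * π) := ⟨by positivity⟩

/-- The unit circle, modelled additively as `ℝ / 2πℤ`. -/
abbrev UC : Type := AddCircle (2 * π)

/-- Normalized arc-length (Haar) measure on the circle. -/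
abbrev volUC : Measure UC := volume

/-- The Lebesgue space `L^p(𝕋)`. -/
abbrev LpC (p : ℝ≥0∞) : Type := Lp ℂ p volUC

/-- The reflection `ã(t) := a(1/t)` (in additive coordinates, `t ↦ -t`). -/
def tildeF (a : UC → ℂ) : UC → ℂ := fun t => a (-t)

/-- The function `t ↦ t^n` on the circle (in additive coordinates, `fourier n`). -/
def tpow (n : ℤ) : UC → ℂ := fun t => fourier n t

/-- The first function `c := b̃·ã⁻¹` of the subordinated pair (here `atinv` denotes `ã⁻¹`). -/
def subC (b atinv : UC → ℂ) : UC → ℂ := fun t => tildeF b t * atinv t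

/-- The second function `d := b·ã⁻¹` of the subordinated pair. -/
def subD (b atinv : UC → ℂ) : UC → ℂ := fun t => b t * atinv t

/-- The basic operators on `L^p(𝕋)`: the Riesz projection `P` (characterized by its action on
Fourier coefficients), the flip `J`, `(Jf)(t) = t⁻¹ f(1/t)` (characterized on Fourier
coefficients by `n ↦ -n-1`), and the multiplication operators `M a` for `a ∈ L^∞`. -/
structure CircleOps (p : ℝ≥0∞) [Fact (1 ≤ p)] where
  P : LpC p →L[ℂ] LpC p
  J : LpC p →L[ℂ] LpC p
  M : (UC → ℂ) → LpC p →L[ℂ] LpC p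
  P_spec : ∀ (f : LpC p) (n : ℤ),
    fourierCoeff (⇑(P f)) n = if 0 ≤ n then fourierCoeff (⇑f) n else 0
  J_spec : ∀ (f : LpC p) (n : ℤ),
    fourierCoeff (⇑(J f)) n = fourierCoeff (⇑f) (-n - 1)
  M_spec : ∀ (a : UC → ℂ), MemLp a ⊤ volUC →
    ∀ f : LpC p, ⇑(M a f) =ᵐ[volUC] fun t => a t * f t

/-- The Hardy space `H^p(𝕋)`, as the subset of `L^p(𝕋)` of functions whose negatively indexed
Fourier coefficients vanish. -/
def HardyS (p : ℝ≥0∞) [Fact (1 ≤ p)] : Set (LpC p) :=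
  {f | ∀ n : ℤ, n < 0 → fourierCoeff (⇑f) n = 0}

/-- A `2×2` operator matrix acting on `E × E`. -/
def mat2 {E : Type*} [NormedAddCommGroup E] [NormedSpace ℂ E]
    (A B C D : E →L[ℂ] E) : (E × E) →L[ℂ] (E × E) :=
  ((A ∘L ContinuousLinearMap.fst ℂ E E) + (B ∘L ContinuousLinearMap.snd ℂ E E)).prod
    ((C ∘L ContinuousLinearMap.fst ℂ E E) + (D ∘L ContinuousLinearMap.snd ℂ E E))

namespace CircleOps

variable {p : ℝ≥0∞} [Fact (1 ≤ p)] (O : CircleOps p)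

/-- `Q := I - P`. -/
def Q : LpC p →L[ℂ] LpC p := ContinuousLinearMap.id ℂ (LpC p) - O.P

/-- The Toeplitz operator `T(a) := P a P`. -/
def Toep (a : UC → ℂ) : LpC p →L[ℂ] LpC p := O.P ∘L O.M a ∘L O.P

/-- The Hankel operator `H(b) := P b Q J`. -/
def Hank (b : UC → ℂ) : LpC p →L[ℂ] LpC p := O.P ∘L O.M b ∘L O.Q ∘L O.J

/-- `ℛ := diag(T(a)+H(b), T(a)-H(b))`. -/
def Rdiag (a b : UC → ℂ) : (LpC p × LpC p) →L[ℂ] (LpC p × LpC p) :=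
  mat2 (O.Toep a + O.Hank b) 0 0 (O.Toep a - O.Hank b)

/-- `𝒫 := diag(P,P)`. -/
def PP : (LpC p × LpC p) →L[ℂ] (LpC p × LpC p) := mat2 O.P 0 0 O.P

/-- `𝒬 := diag(Q,Q)`. -/
def QQ : (LpC p × LpC p) →L[ℂ] (LpC p × LpC p) := mat2 O.Q 0 0 O.Q

/-- `𝒥 := (1/2)[[I,J],[I,-J]]`. -/
def Jop : (LpC p × LpC p) →L[ℂ] (LpC p × LpC p) :=
  (2:ℂ)⁻¹ • mat2 (ContinuousLinearMap.id ℂ (LpC p)) O.J (ContinuousLinearMap.id ℂ (LpC p)) (-O.J)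

/-- `𝒥⁻¹ = [[I,I],[J,-J]]`. -/
def Jinv : (LpC p × LpC p) →L[ℂ] (LpC p × LpC p) :=
  mat2 (ContinuousLinearMap.id ℂ (LpC p)) (ContinuousLinearMap.id ℂ (LpC p)) O.J (-O.J)

/-- `T(V(a,b)) = 𝒫 V(a,b) 𝒫`, where `V(a,b) = [[a - b b̃ ã⁻¹, b ã⁻¹],[-b̃ ã⁻¹, ã⁻¹]]`
(`atinv` denotes `ã⁻¹`). -/
def TV (a b atinv : UC → ℂ) : (LpC p × LpC p) →L[ℂ] (LpC p × LpC p) :=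
  mat2 (O.Toep fun t => a t - b t * tildeF b t * atinv t)
    (O.Toep fun t => b t * atinv t)
    (O.Toep fun t => -(tildeF b t * atinv t))
    (O.Toep atinv)

/-- `𝒫 V(a,b) 𝒬`. -/
def PVQ (a b atinv : UC → ℂ) : (LpC p × LpC p) →L[ℂ] (LpC p × LpC p) :=
  mat2 (O.P ∘L O.M (fun t => a t - b t * tildeF b t * atinv t) ∘L O.Q)
    (O.P ∘L O.M (fun t => b t * atinv t) ∘L O.Q)
    (O.P ∘L O.M (fun t => -(tildeF b t * atinv t)) ∘L O.Q)
    (O.P ∘L O.M atinv ∘L O.Q)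

/-- `A₁ := I - diag(P,Q)·[[a,b],[b̃,ã]]·diag(Q,P)`. -/
def A1 (a b : UC → ℂ) : (LpC p × LpC p) →L[ℂ] (LpC p × LpC p) :=
  ContinuousLinearMap.id ℂ (LpC p × LpC p) -
    mat2 (O.P ∘L O.M a ∘L O.Q) (O.P ∘L O.M b ∘L O.P)
      (O.Q ∘L O.M (tildeF b) ∘L O.Q) (O.Q ∘L O.M (tildeF a) ∘L O.P)

/-- `A₂ := I + 𝒫 V(a,b) 𝒬`. -/
def A2 (a b atinv : UC → ℂ) : (LpC p × LpC p) →L[ℂ] (LpC p × LpC p) :=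
  ContinuousLinearMap.id ℂ (LpC p × LpC p) + O.PVQ a b atinv

/-- The operator `W φ := T_r⁻¹(c) T(ã⁻¹) φ - J Q c P T_r⁻¹(c) T(ã⁻¹) φ + J Q ã⁻¹ φ`,
where `Trc` is (the chosen right inverse) `T_r⁻¹(c)`. -/
def Wop (c atinv : UC → ℂ) (Trc : LpC p →L[ℂ] LpC p) : LpC p →L[ℂ] LpC p :=
  Trc ∘L O.Toep atinv
    - O.J ∘L O.Q ∘L O.M c ∘L O.P ∘L Trc ∘L O.Toep atinv
    + O.J ∘L O.Q ∘L O.M atinv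

/-- The particular solution
`Tc T(ã⁻¹) Td f - J Q c Tc T(ã⁻¹) Td f + J Q ã⁻¹ Td f`, where `Tc`, `Td` are
(one-sided) inverses of `T(c)`, `T(d)`. -/
def baseSol (c atinv : UC → ℂ) (Tc Td : LpC p →L[ℂ] LpC p) (f : LpC p) : LpC p :=
  Tc (O.Toep atinv (Td f)) - O.J (O.Q (O.M c (Tc (O.Toep atinv (Td f)))))
    + O.J (O.Q (O.M atinv (Td f)))

end CircleOps

/-- Wiener–Hopf factorization data for `g` in the sense of the paper:
`g = g₋ t^n g₊` with `n = -ind` (so `ind = ind T(g)`), together with the membership and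
normalization conditions.  (For simplicity all factors are taken essentially bounded.) -/
structure WHFact (g : UC → ℂ) where
  ind : ℤ
  gp : UC → ℂ
  gm : UC → ℂ
  gpInv : UC → ℂ
  gmInv : UC → ℂ
  hgp : MemLp gp ⊤ volUC
  hgm : MemLp gm ⊤ volUC
  hgpInv : MemLp gpInv ⊤ volUC
  hgmInv : MemLp gmInv ⊤ volUC
  hp_inv : ∀ᵐ t ∂volUC, gp t * gpInv t = 1
  hm_inv : ∀ᵐ t ∂volUC, gm t * gmInv t = 1
  hfact : ∀ᵐ t ∂volUC, g t = gm t * tpow (-ind) t * gp t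
  hgpH : ∀ n : ℤ, n < 0 → fourierCoeff gp n = 0
  hgpInvH : ∀ n : ℤ, n < 0 → fourierCoeff gpInv n = 0
  hgmH : ∀ n : ℤ, 0 < n → fourierCoeff gm n = 0
  hgmInvH : ∀ n : ℤ, 0 < n → fourierCoeff gmInv n = 0
  hgmInfty : fourierCoeff gm 0 = 1

/-- The right inverse `T_r⁻¹(g) := T(g₊⁻¹) T(g₋⁻¹) T(t^{-n})`, `n = -ind ≤ 0`. -/
def WHFact.Tr {g : UC → ℂ} (F : WHFact g) {p : ℝ≥0∞} [Fact (1 ≤ p)] (O : CircleOps p) :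
    LpC p →L[ℂ] LpC p :=
  O.Toep F.gpInv ∘L O.Toep F.gmInv ∘L O.Toep (tpow F.ind)

/-- The left inverse `T_l⁻¹(g) := T(t^{-n}) T(g₊⁻¹) T(g₋⁻¹)`, `n = -ind ≥ 0`. -/
def WHFact.Tl {g : UC → ℂ} (F : WHFact g) {p : ℝ≥0∞} [Fact (1 ≤ p)] (O : CircleOps p) :
    LpC p →L[ℂ] LpC p :=
  O.Toep (tpow F.ind) ∘L O.Toep F.gpInv ∘L O.Toep F.gmInv

/-- The number of kernel basis functions `u_0, …, u_{κ(i)}`: `m` if `κ = 2m`, `m+1` if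
`κ = 2m+1`. -/
def numU (κ : ℤ) : ℕ := ((κ + 1) / 2).toNat

/-- The functions `u_k^{(κ(s),±)}`: for `κ = 2m`, `u_k(t) = t^{m-k-1} ± σ t^{m+k}`; for
`κ = 2m+1`, `u_k(t) = t^{m+k} ± σ t^{m-k}`.  Here `sgn = ±1`, and `σ` is the factorization
signature. -/
def ubasis (κ : ℤ) (σ sgn : ℂ) (k : ℕ) : UC → ℂ :=
  if κ % 2 = 0 then
    fun t => fourier (κ / 2 - (k:ℤ) - 1) t + sgn * σ * fourier (κ / 2 + (k:ℤ)) t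
  else
    fun t => fourier (κ / 2 + (k:ℤ)) t + sgn * σ * fourier (κ / 2 - (k:ℤ)) t

/-- `sign(r)`: `0` if `r = 0` and `1` if `r > 0` (as a complex scalar). -/
def sgnInd (κ : ℤ) : ℂ := if κ = 0 then 0 else 1



/-! ### Auxiliary lemmas -/

section Aux
open Set Filter Topology Submodule
open scoped NNReal

abbrev haarUC : Measure UC := AddCircle.haarAddCircle

lemma vol_eq_smul_haar : volUC = ENNReal.ofReal (2*π) • haarUC :=
  AddCircle.volume_eq_smul_haarAddCircle

lemma haar_eq_smul_vol : haarUC = (ENNReal.ofReal (2*π))⁻¹ • volUC := by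
  rw [vol_eq_smul_haar, smul_smul,
    ENNReal.inv_mul_cancel (by positivity) ENNReal.ofReal_ne_top, one_smul]

lemma ae_haar_of_ae_vol {f g : UC → ℂ} (h : f =ᵐ[volUC] g) : f =ᵐ[haarUC] g := by
  rw [haar_eq_smul_vol]; exact Measure.ae_smul_measure h _

lemma ae_vol_of_ae_haar {f g : UC → ℂ} (h : f =ᵐ[haarUC] g) : f =ᵐ[volUC] g := by
  rw [vol_eq_smul_haar]; exact Measure.ae_smul_measure h _

lemma integrable_haar_of_vol {f : UC → ℂ} (h : Integrable f volUC) : Integrable f haarUC := by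
  rw [haar_eq_smul_vol]; exact h.smul_measure (by simp [ENNReal.inv_ne_top]; positivity)

lemma norm_fourier (n : ℤ) (x : UC) : ‖fourier n x‖ = 1 := by
  rw [fourier_apply, Circle.norm_coe]

lemma fourierCoeff_def (f : UC → ℂ) (n : ℤ) :
    fourierCoeff f n = ∫ t : UC, fourier (-n) t * f t ∂haarUC := by
  simp [fourierCoeff, smul_eq_mul]

lemma fourierCoeff_congr {f g : UC → ℂ} (h : f =ᵐ[volUC] g) (n : ℤ) :
    fourierCoeff f n = fourierCoeff g n := by
  rw [fourierCoeff_def, fourierCoeff_def]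
  exact integral_congr_ae ((ae_haar_of_ae_vol h).mono fun x hx => by simp only [hx])

lemma integrable_fourier_mul {f : UC → ℂ} (hf : Integrable f haarUC) (m : ℤ) :
    Integrable (fun t => fourier m t * f t) haarUC :=
  hf.bdd_mul (ContinuousMap.continuous _).aestronglyMeasurable
    (Eventually.of_forall fun x => le_of_eq (norm_fourier m x))

lemma fourierCoeff_sub {f g : UC → ℂ} (hf : Integrable f haarUC) (hg : Integrable g haarUC)
    (n : ℤ) : fourierCoeff (f - g) n = fourierCoeff f n - fourierCoeff g n := by
  rw [fourierCoeff_def, fourierCoeff_def, fourierCoeff_def, ← integral_sub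
    (integrable_fourier_mul hf _) (integrable_fourier_mul hg _)]
  congr 1; ext t; simp [Pi.sub_apply, mul_sub]

/-- Shift formula: coefficient of `t^m * f`. -/
lemma fourierCoeff_fourier_mul (f : UC → ℂ) (m k : ℤ) :
    fourierCoeff (fun t => fourier m t * f t) k = fourierCoeff f (k - m) := by
  rw [fourierCoeff_def, fourierCoeff_def]
  congr 1; ext t
  rw [← mul_assoc, ← fourier_add]
  congr 2; ring

/-- If all Fourier coefficients of an integrable function vanish, it is a.e. zero. -/
lemma ae_zero_of_fourierCoeff_zero {g : UC → ℂ} (hg : Integrable g volUC)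
    (h : ∀ n : ℤ, fourierCoeff g n = 0) : g =ᵐ[volUC] 0 := by
  have hgh : Integrable g haarUC := integrable_haar_of_vol hg
  -- step 1: integral against continuous functions vanishes
  have key : ∀ c : C(UC, ℂ), ∫ x, c x * g x ∂haarUC = 0 := by
    have hL : ∀ c : C(UC, ℂ), Integrable (fun x => c x * g x) haarUC := fun c =>
      hgh.bdd_mul c.continuous.aestronglyMeasurable (Eventually.of_forall fun x => c.norm_coe_le_norm x)
    set L : C(UC, ℂ) →ₗ[ℂ] ℂ :=
      { toFun := fun c => ∫ x, c x * g x ∂haarUC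
        map_add' := by
          intro c d
          simp only [ContinuousMap.add_apply, add_mul]
          exact integral_add (hL c) (hL d)
        map_smul' := by
          intro s c
          simp only [ContinuousMap.coe_smul, Pi.smul_apply, smul_eq_mul, mul_assoc,
            RingHom.id_apply]
          exact integral_const_mul s _ } with hLdef
    have hcont : Continuous L := by
      apply (LinearMap.mkContinuous L (∫ x, ‖g x‖ ∂haarUC) ?_).continuous
      intro c
      calc ‖∫ x, c x * g x ∂haarUC‖ ≤ ∫ x, ‖c x * g x‖ ∂haarUC := norm_integral_le_integral_norm _
        _ ≤ ∫ x, ‖c‖ * ‖g x‖ ∂haarUC := by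
            refine integral_mono_of_nonneg (Eventually.of_forall fun x => norm_nonneg _)
              (hgh.norm.const_mul _) (Eventually.of_forall fun x => ?_)
            dsimp only
            rw [norm_mul]
            exact mul_le_mul_of_nonneg_right (c.norm_coe_le_norm x) (norm_nonneg _)
        _ = (∫ x, ‖g x‖ ∂haarUC) * ‖c‖ := by rw [integral_const_mul]; ring
    have h1 : span ℂ (range <| @fourier (2*π)) ≤ LinearMap.ker L := by
      rw [span_le]
      rintro _ ⟨m, rfl⟩
      have hLf : L (fourier m) = fourierCoeff g (-m) := by
        rw [fourierCoeff_def]; simp only [hLdef, LinearMap.coe_mk, AddHom.coe_mk, neg_neg]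
      simp only [SetLike.mem_coe, LinearMap.mem_ker, hLf, h]
    have h2 : IsClosed ((LinearMap.ker L : Submodule ℂ C(UC, ℂ)) : Set C(UC, ℂ)) := by
      have hk : ((LinearMap.ker L : Submodule ℂ C(UC, ℂ)) : Set C(UC, ℂ)) = L ⁻¹' {0} := by
        ext c; simp
      rw [hk]
      exact IsClosed.preimage hcont isClosed_singleton
    have h3 := Submodule.topologicalClosure_minimal _ h1 h2
    rw [span_fourier_closure_eq_top] at h3
    intro c
    exact h3 (mem_top (x := c))
  -- step 2: integral over closed sets vanishes
  have hclosed : ∀ s : Set UC, IsClosed s → ∫ x in s, g x ∂haarUC = 0 := by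
    intro s hs
    set δseq : ℕ → ℝ := fun n => (n + 1 : ℝ)⁻¹ with hδ
    have δpos : ∀ n : ℕ, 0 < δseq n := fun n => by positivity
    have δlim : Tendsto δseq atTop (𝓝 0) := by
      simpa [hδ, one_div] using tendsto_one_div_add_atTop_nhds_zero_nat (𝕜 := ℝ)
    set c : ℕ → UC → ℂ := fun n x => ((thickenedIndicator (δpos n) s x : ℝ) : ℂ) with hc
    have hcont : ∀ n, Continuous (c n) := fun n =>
      Complex.continuous_ofReal.comp (NNReal.continuous_coe.comp
        (thickenedIndicator (δpos n) s).continuous)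
    have hbd : ∀ n x, ‖c n x * g x‖ ≤ ‖g x‖ := by
      intro n x
      rw [norm_mul]
      apply mul_le_of_le_one_left (norm_nonneg _)
      have hnn : ‖c n x‖ = ((thickenedIndicator (δpos n) s x : ℝ)) := by
        simp [hc, Complex.norm_real, Real.norm_eq_abs,
          _root_.abs_of_nonneg (NNReal.coe_nonneg _)]
      rw [hnn]
      exact_mod_cast thickenedIndicator_le_one (δpos n) s x
    have hlim : ∀ᵐ x ∂haarUC, Tendsto (fun n => c n x * g x) atTop (𝓝 (s.indicator g x)) := by
      refine Eventually.of_forall fun x => ?_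
      have h1 := tendsto_pi_nhds.1 (thickenedIndicator_tendsto_indicator_closure δpos δlim s) x
      rw [hs.closure_eq] at h1
      have hcc : Continuous fun r : ℝ≥0 => ((r : ℝ) : ℂ) :=
        Complex.continuous_ofReal.comp NNReal.continuous_coe
      have h2 : Tendsto (fun n => c n x) atTop
          (𝓝 (((s.indicator (fun _ => (1 : ℝ≥0)) x : ℝ≥0) : ℝ) : ℂ)) :=
        (hcc.continuousAt.tendsto).comp h1
      have h3 := h2.mul_const (g x)
      convert h3 using 2
      by_cases hx : x ∈ s <;> simp [Set.indicator, hx]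
    have hI := tendsto_integral_of_dominated_convergence (fun x => ‖g x‖)
      (fun n => ((hcont n).aestronglyMeasurable.mul hgh.1)) hgh.norm
      (fun n => Eventually.of_forall fun x => hbd n x) hlim
    have hz : ∀ n, ∫ x, c n x * g x ∂haarUC = 0 := fun n => key ⟨c n, hcont n⟩
    simp only [Pi.mul_apply, hz] at hI
    have hzero := tendsto_nhds_unique hI tendsto_const_nhds
    rw [integral_indicator hs.measurableSet] at hzero
    exact hzero
  exact ae_vol_of_ae_haar (ae_eq_zero_of_forall_setIntegral_isClosed_eq_zero hgh hclosed)

variable {p : ℝ≥0∞} [Fact (1 ≤ p)]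

lemma integrable_LpC (f : LpC p) : Integrable (⇑f) volUC :=
  (Lp.memLp f).integrable Fact.out

/-- Elements of `L^p` with the same Fourier coefficients coincide. -/
lemma Lp_ext_coeff (f g : LpC p)
    (h : ∀ n : ℤ, fourierCoeff (⇑f) n = fourierCoeff (⇑g) n) : f = g := by
  have hf := integrable_LpC f
  have hg := integrable_LpC g
  apply Lp.ext (p := p) (μ := volUC)
  have h0 : (⇑f - ⇑g) =ᵐ[volUC] 0 := by
    apply ae_zero_of_fourierCoeff_zero (hf.sub hg)
    intro n
    rw [fourierCoeff_sub (integrable_haar_of_vol hf) (integrable_haar_of_vol hg), h n, sub_self]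
  filter_upwards [h0] with x hx
  have hx' : f x - g x = 0 := hx
  exact sub_eq_zero.1 hx'

lemma fourierCoeff_Lp_sub (f g : LpC p) (n : ℤ) :
    fourierCoeff (⇑(f - g)) n = fourierCoeff (⇑f) n - fourierCoeff (⇑g) n := by
  rw [fourierCoeff_congr (Lp.coeFn_sub f g) n]
  exact fourierCoeff_sub (integrable_haar_of_vol (integrable_LpC f))
    (integrable_haar_of_vol (integrable_LpC g)) n

lemma memLpTop_tpow (m : ℤ) : MemLp (tpow m) ⊤ volUC :=
  memLp_top_of_bound (ContinuousMap.continuous _).aestronglyMeasurable 1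
    (Eventually.of_forall fun x => (norm_fourier m x).le)

lemma memLpTop_bound {a : UC → ℂ} (ha : MemLp a ⊤ volUC) :
    ∃ C : ℝ, ∀ᵐ t ∂volUC, ‖a t‖ ≤ C := by
  refine ⟨(eLpNormEssSup a volUC).toReal, ?_⟩
  have h1 : eLpNormEssSup a volUC < ⊤ := by
    have h2 := ha.2; rwa [eLpNorm_exponent_top] at h2
  filter_upwards [enorm_ae_le_eLpNormEssSup a volUC] with x hx
  have h3 := ENNReal.toReal_mono h1.ne hx
  simpa using h3

lemma memLpTop_mul {a b : UC → ℂ} (ha : MemLp a ⊤ volUC) (hb : MemLp b ⊤ volUC) :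
    MemLp (fun t => a t * b t) ⊤ volUC := by
  obtain ⟨C, hC⟩ := memLpTop_bound ha
  obtain ⟨D, hD⟩ := memLpTop_bound hb
  refine memLp_top_of_bound (ha.1.mul hb.1) (max C 0 * max D 0) ?_
  filter_upwards [hC, hD] with t htC htD
  rw [norm_mul]
  exact mul_le_mul (htC.trans (le_max_left C 0)) (htD.trans (le_max_left D 0))
    (norm_nonneg _) (le_max_right C 0)

end Aux


/-- Corollary 3.7: if `(T(t^{-n}a) + H(t^n b))ψ = f` has no solution in the
image of `T(t^n) : H^p → H^p`, then `(T(a)+H(b))φ = f` is not solvable. -/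
theorem stmt7 (p : ℝ≥0∞) [Fact (1 ≤ p)] (hp : 1 < p) (hp' : p ≠ ⊤)
    (a b : UC → ℂ) (ha : MemLp a ⊤ volUC) (hb : MemLp b ⊤ volUC)
    (O : CircleOps p) (n : ℕ)
    (f : LpC p) (hf : f ∈ HardyS p)
    (hno : ∀ ψ ∈ O.Toep (tpow (n : ℤ)) '' HardyS p,
      (O.Toep (fun t => tpow (-(n : ℤ)) t * a t) + O.Hank (fun t => tpow (n : ℤ) t * b t)) ψ
        ≠ f) :
    ∀ φ ∈ HardyS p, (O.Toep a + O.Hank b) φ ≠ f := by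
  intro φ hφ hφeq
  set N : ℤ := (n : ℤ) with hN
  have hN0 : (0:ℤ) ≤ N := Int.natCast_nonneg n
  have hPcoeff : ∀ (g : LpC p) (k : ℤ), k < 0 → fourierCoeff (⇑(O.P g)) k = 0 := by
    intro g k hk; rw [O.P_spec]; simp [not_le.mpr hk]
  have hhardyP : ∀ g : LpC p, (∀ k : ℤ, k < 0 → fourierCoeff (⇑g) k = 0) → O.P g = g := by
    intro g hg
    apply Lp_ext_coeff
    intro k
    rw [O.P_spec]
    by_cases hk : 0 ≤ k
    · simp [hk]
    · simp [hk, hg k (not_le.1 hk)]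
  have hQcoeff : ∀ (g : LpC p) (k : ℤ),
      fourierCoeff (⇑(O.Q g)) k = if 0 ≤ k then 0 else fourierCoeff (⇑g) k := by
    intro g k
    have hQg : O.Q g = g - O.P g := by
      simp [CircleOps.Q, ContinuousLinearMap.sub_apply]
    rw [hQg, fourierCoeff_Lp_sub, O.P_spec]
    by_cases hk : 0 ≤ k <;> simp [hk]
  have hMfour : ∀ (m : ℤ) (g : LpC p) (k : ℤ),
      fourierCoeff (⇑(O.M (tpow m) g)) k = fourierCoeff (⇑g) (k - m) := by
    intro m g k
    rw [fourierCoeff_congr (O.M_spec (tpow m) (memLpTop_tpow m) g) k]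
    exact fourierCoeff_fourier_mul (⇑g) m k
  have hPφ : O.P φ = φ := hhardyP φ hφ
  set ψ : LpC p := O.Toep (tpow N) φ with hψ
  refine hno ψ ⟨φ, hφ, rfl⟩ ?_
  have hψcoeff0 : ∀ k : ℤ, fourierCoeff (⇑(O.M (tpow N) φ)) k = fourierCoeff (⇑φ) (k - N) :=
    fun k => hMfour N φ k
  have hψeq : ψ = O.M (tpow N) φ := by
    rw [hψ]
    show O.P (O.M (tpow N) (O.P φ)) = _
    rw [hPφ]
    exact hhardyP _ (fun k hk => by rw [hψcoeff0]; exact hφ _ (by omega))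
  have hψc : ∀ k : ℤ, fourierCoeff (⇑ψ) k = fourierCoeff (⇑φ) (k - N) := by
    intro k; rw [hψeq]; exact hψcoeff0 k
  have hψhardy : ∀ k : ℤ, k < 0 → fourierCoeff (⇑ψ) k = 0 := fun k hk => by
    rw [hψc]; exact hφ _ (by omega)
  have hPψ : O.P ψ = ψ := hhardyP ψ hψhardy
  -- Toeplitz part
  have hTpart : O.Toep (fun t => tpow (-N) t * a t) ψ = O.Toep a φ := by
    show O.P (O.M _ (O.P ψ)) = O.P (O.M a (O.P φ))
    rw [hPψ, hPφ]
    congr 1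
    apply Lp.ext (p := p) (μ := volUC)
    have h1 := O.M_spec _ (memLpTop_mul (memLpTop_tpow (-N)) ha) ψ
    have h2 := O.M_spec a ha φ
    have hψae : ⇑ψ =ᵐ[volUC] fun t => tpow N t * (⇑φ) t := by
      rw [hψeq]; exact O.M_spec (tpow N) (memLpTop_tpow N) φ
    filter_upwards [h1, h2, hψae] with t ht1 ht2 htψ
    rw [ht1, ht2, htψ]
    have hone : tpow (-N) t * tpow N t = 1 := by
      simp only [tpow, ← fourier_add, neg_add_cancel, fourier_zero]
    calc tpow (-N) t * a t * (tpow N t * (⇑φ) t)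
        = (tpow (-N) t * tpow N t) * (a t * (⇑φ) t) := by ring
      _ = a t * (⇑φ) t := by rw [hone, one_mul]
  -- Hankel part
  have hQJeq : O.M (tpow N) (O.Q (O.J ψ)) = O.Q (O.J φ) := by
    apply Lp_ext_coeff; intro k
    rw [hMfour, hQcoeff, hQcoeff, O.J_spec, O.J_spec, hψc]
    by_cases h1 : 0 ≤ k
    · by_cases h2 : 0 ≤ k - N
      · simp [h1, h2]; intro h; omega
      · rw [if_neg h2, if_pos h1]
        have he : -(k - N) - 1 - N = -k - 1 := by ring
        rw [he]
        exact hφ _ (by omega)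
    · have h2 : ¬ (0:ℤ) ≤ k - N := by omega
      rw [if_neg h1, if_neg h2]
      congr 1; ring
  have hHpart : O.Hank (fun t => tpow N t * b t) ψ = O.Hank b φ := by
    show O.P (O.M _ (O.Q (O.J ψ))) = O.P (O.M b (O.Q (O.J φ)))
    congr 1
    apply Lp.ext (p := p) (μ := volUC)
    have h1 := O.M_spec _ (memLpTop_mul (memLpTop_tpow N) hb) (O.Q (O.J ψ))
    have h2 := O.M_spec b hb (O.Q (O.J φ))
    have h4 := O.M_spec (tpow N) (memLpTop_tpow N) (O.Q (O.J ψ))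
    filter_upwards [h1, h2, h4] with t ht1 ht2 ht4
    rw [ht1, ht2, ← hQJeq, ht4]
    ring
  show (O.Toep _ + O.Hank _) ψ = f
  rw [ContinuousLinearMap.add_apply, hTpart, hHpart, ← ContinuousLinearMap.add_apply, hφeq]

end
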